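/- Let I be a Hausdorff, locally connected, first-countable topological space, P ⊆ I a closed subset, and Φ : I → I a homeomorphism with Φ(P) = P. Let η : [0,∞) → [0,∞) be a homeomorphism with η(t) < t for every t > 0. Let X := (I × [0,∞)) ∖ (P × {0}) with the subspace topology, let γ : X → X be the homeomorphism γ(x,t) = (Φ(x), η(t)), and let F : X → ℝ be a continuous proper map (preimages of compact sets are compact) satisfying F(γ(z)) = F(z) + 1 for all z ∈ X. Define f : I ∖ P → ℝ by f(x) := F(x,0) and set C := P ∪ { x ∈ I ∖ P : f(x) ≥ 0 }. Then: (1) Φ(C) is contained in the topological interior of C; (2) ⋂_{i ∈ ℤ} Φ^i(C) = P; and (3) ⋃_{i ∈ ℤ} Φ^i(C) = I. -/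

import Mathlib

open Set Filter Topology
open scoped NNReal

set_option maxHeartbeats 1000000 in
/-- in the same setting, with f(x) := F(x,0) on I ∖ P and
C := P ∪ {f ≥ 0}, one has Φ(C) ⊆ int C, ⋂_{i∈ℤ} Φ^i(C) = P and ⋃_{i∈ℤ} Φ^i(C) = I.
Here [0,∞) is modelled by ℝ≥0. -/
theorem stmt15 {I : Type*} [TopologicalSpace I] [T2Space I]
    [LocallyConnectedSpace I] [FirstCountableTopology I]
    (P : Set I) (hP : IsClosed P)
    (Φ : I ≃ₜ I) (hΦP : Φ '' P = P)
    (η : ℝ≥0 ≃ₜ ℝ≥0) (hη : ∀ t : ℝ≥0, 0 < t → η t < t)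
    (Xs : Set (I × ℝ≥0)) (hXs : Xs = {z : I × ℝ≥0 | ¬(z.1 ∈ P ∧ z.2 = 0)})
    (F : I × ℝ≥0 → ℝ)
    (hFc : ContinuousOn F Xs)
    (hFprop : ∀ K : Set ℝ, IsCompact K → IsCompact (Xs ∩ F ⁻¹' K))
    (hFeq : ∀ z ∈ Xs, F (Φ z.1, η z.2) = F z + 1)
    (C : Set I) (hC : C = P ∪ {x : I | x ∉ P ∧ 0 ≤ F (x, 0)}) :
    Φ '' C ⊆ interior C ∧
    (⋂ i : ℤ, ⇑(Φ.toEquiv ^ i) '' C) = P ∧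
    (⋃ i : ℤ, ⇑(Φ.toEquiv ^ i) '' C) = Set.univ := by
  classical
  have mXs : ∀ z : I × ℝ≥0, z ∈ Xs ↔ ¬(z.1 ∈ P ∧ z.2 = 0) := by
    intro z; rw [hXs]; exact Iff.rfl
  have hXsOpen : IsOpen Xs := by
    have h : IsClosed {z : I × ℝ≥0 | z.1 ∈ P ∧ z.2 = 0} :=
      (hP.preimage continuous_fst).inter (isClosed_singleton.preimage continuous_snd)
    rw [hXs]
    exact h.isOpen_compl
  have hP1 : ∀ x : I, Φ x ∈ P ↔ x ∈ P := by
    intro x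
    constructor
    · intro h
      rw [← hΦP] at h
      obtain ⟨y, hy, hyx⟩ := h
      rwa [← Φ.injective hyx]
    · intro h; rw [← hΦP]; exact ⟨x, h, rfl⟩
  -- the sequence (n+1)⁻¹ tends to 0 in ℝ≥0
  have Tnn : Tendsto (fun n : ℕ => ((n : ℝ≥0) + 1)⁻¹) atTop (𝓝 0) := by
    rw [← NNReal.tendsto_coe]
    have := tendsto_one_div_add_atTop_nhds_zero_nat (𝕜 := ℝ)
    convert this using 2 with n
    push_cast
    rw [one_div]
    simp
  -- η fixes 0
  have η0 : η (0 : ℝ≥0) = 0 := by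
    refine le_antisymm ?_ (zero_le)
    have h1 : Tendsto (fun n : ℕ => η (((n : ℝ≥0) + 1)⁻¹)) atTop (𝓝 (η 0)) :=
      (η.continuous.tendsto 0).comp Tnn
    refine le_of_tendsto_of_tendsto' h1 Tnn fun n => ?_
    exact (hη _ (by positivity)).le
  have ηle : ∀ t : ℝ≥0, η t ≤ t := by
    intro t
    rcases eq_or_lt_of_le (zero_le (a := t)) with h | h
    · rw [← h, η0]
    · exact (hη t h).le
  have ηne : ∀ t : ℝ≥0, t ≠ 0 → η t ≠ 0 := by
    intro t ht h
    exact ht (η.injective (h.trans η0.symm))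
  -- one step of γ
  have γstep : ∀ z : I × ℝ≥0, z ∈ Xs → ((Φ z.1, η z.2) ∈ Xs ∧ F (Φ z.1, η z.2) = F z + 1) := by
    intro z hz
    refine ⟨?_, hFeq z hz⟩
    rw [mXs]
    rintro ⟨h1, h2⟩
    exact (mXs z).mp hz ⟨(hP1 z.1).mp h1, η.injective (h2.trans η0.symm)⟩
  -- iterates of γ
  have natIter : ∀ k : ℕ, ∀ z : I × ℝ≥0, z ∈ Xs →
      (((⇑Φ)^[k] z.1, (⇑η)^[k] z.2) ∈ Xs ∧ F ((⇑Φ)^[k] z.1, (⇑η)^[k] z.2) = F z + k) := by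
    intro k
    induction k with
    | zero => intro z hz; simpa using hz
    | succ k ih =>
      intro z hz
      obtain ⟨h1, h2⟩ := ih z hz
      obtain ⟨h3, h4⟩ := γstep _ h1
      rw [Function.iterate_succ_apply', Function.iterate_succ_apply']
      refine ⟨h3, ?_⟩
      rw [h4, h2]
      push_cast
      ring
  have ΦkP : ∀ k : ℕ, ∀ x ∈ P, (⇑Φ)^[k] x ∈ P := by
    intro k
    induction k with
    | zero => intro x hx; simpa using hx
    | succ k ih =>
      intro x hx
      rw [Function.iterate_succ_apply']
      exact (hP1 _).mpr (ih x hx)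
  have ηkle : ∀ k : ℕ, ∀ t : ℝ≥0, (⇑η)^[k] t ≤ t := by
    intro k
    induction k with
    | zero => intro t; simp
    | succ k ih =>
      intro t
      rw [Function.iterate_succ_apply']
      exact (ηle _).trans (ih t)
  have key : ∀ x ∈ P, ∀ M : ℝ, ∃ δ : ℝ≥0, 0 < δ ∧ ∀ t : ℝ≥0, 0 < t → t < δ → M < F (x, t) := by
    intro x hx M
    by_contra hcon
    push_neg at hcon
    have hch : ∀ n : ℕ, ∃ t : ℝ≥0, 0 < t ∧ t < ((n : ℝ≥0) + 1)⁻¹ ∧ F (x, t) ≤ M := by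
      intro n
      obtain ⟨t, ht0, htlt, hFt⟩ := hcon ((n : ℝ≥0) + 1)⁻¹ (by positivity)
      exact ⟨t, ht0, htlt, hFt⟩
    choose t ht0 htlt hFt using hch
    set M' : ℝ := max M 1 with hM'
    set k : ℕ → ℕ := fun n => ⌈-(F (x, t n))⌉₊ with hk
    set w : ℕ → I × ℝ≥0 := fun n => ((⇑Φ)^[k n] x, (⇑η)^[k n] (t n)) with hw
    have hzXs : ∀ n, ((x, t n) : I × ℝ≥0) ∈ Xs := by
      intro n; rw [mXs]; rintro ⟨-, h2⟩; exact (ht0 n).ne' h2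
    have hwXs : ∀ n, w n ∈ Xs := fun n => (natIter (k n) (x, t n) (hzXs n)).1
    have hwF : ∀ n, F (w n) = F (x, t n) + k n := fun n => (natIter (k n) (x, t n) (hzXs n)).2
    have hwK : ∀ n, w n ∈ Xs ∩ F ⁻¹' (Icc (0:ℝ) M') := by
      intro n
      refine ⟨hwXs n, ?_⟩
      rw [mem_preimage, mem_Icc, hwF n]
      rcases le_or_gt 0 (F (x, t n)) with h | h
      · have hk0 : k n = 0 := by
          rw [hk]
          exact Nat.ceil_eq_zero.mpr (by linarith)
        rw [hk0]
        push_cast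
        constructor
        · linarith
        · have : F (x, t n) ≤ M := hFt n
          have : M ≤ M' := le_max_left _ _
          linarith [hFt n]
      · have hle : -(F (x, t n)) ≤ (k n : ℝ) := Nat.le_ceil _
        have hlt : (k n : ℝ) < -(F (x, t n)) + 1 := Nat.ceil_lt_add_one (by linarith)
        have h1M : (1:ℝ) ≤ M' := le_max_right _ _
        constructor <;> linarith
    obtain ⟨w₀, hw₀K, φ, hφ, hconv⟩ := (hFprop _ isCompact_Icc).tendsto_subseq hwK
    have h2a : Tendsto (fun n => (w (φ n)).2) atTop (𝓝 w₀.2) :=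
      (continuous_snd.tendsto w₀).comp hconv
    have h2b : Tendsto (fun n => (w (φ n)).2) atTop (𝓝 0) := by
      refine tendsto_of_tendsto_of_tendsto_of_le_of_le tendsto_const_nhds
        (Tnn.comp hφ.tendsto_atTop) (fun n => zero_le) ?_
      intro n
      calc (w (φ n)).2 = (⇑η)^[k (φ n)] (t (φ n)) := rfl
        _ ≤ t (φ n) := ηkle _ _
        _ ≤ ((φ n : ℝ≥0) + 1)⁻¹ := (htlt _).le
    have hs0 : w₀.2 = 0 := tendsto_nhds_unique h2a h2b
    have h1a : Tendsto (fun n => (w (φ n)).1) atTop (𝓝 w₀.1) :=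
      (continuous_fst.tendsto w₀).comp hconv
    have hy : w₀.1 ∈ P :=
      hP.mem_of_tendsto h1a (Eventually.of_forall fun n => ΦkP _ x hx)
    exact (mXs w₀).mp hw₀K.1 ⟨hy, hs0⟩
  have intP : ∀ x ∈ P, x ∈ interior C := by
    intro x hx
    by_contra hxint
    have hxcl : x ∈ closure Cᶜ := by
      rw [closure_compl]
      exact hxint
    obtain ⟨u, hu, hulim⟩ := mem_closure_iff_seq_limit.mp hxcl
    have huP : ∀ n, u n ∉ P ∧ F (u n, 0) < 0 := by
      intro n
      have h := hu n
      rw [hC] at h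
      simp only [mem_compl_iff, mem_union, mem_setOf_eq, not_or, not_and, not_le] at h
      exact ⟨h.1, h.2 h.1⟩
    obtain ⟨δ, hδ0, hδ⟩ := key x hx 1
    set t₀ : ℝ≥0 := δ / 2 with ht₀
    have ht₀0 : 0 < t₀ := by positivity
    have ht₀δ : t₀ < δ := NNReal.half_lt_self hδ0.ne'
    have hxt₀Xs : ((x, t₀) : I × ℝ≥0) ∈ Xs := by
      rw [mXs]; rintro ⟨-, h2⟩; exact ht₀0.ne' h2
    have hxt₀ : 1 < F (x, t₀) := hδ t₀ ht₀0 ht₀δ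
    have hcontAt : ContinuousAt F (x, t₀) := hFc.continuousAt (hXsOpen.mem_nhds hxt₀Xs)
    have hpair : Tendsto (fun n => ((u n, t₀) : I × ℝ≥0)) atTop (𝓝 (x, t₀)) :=
      hulim.prodMk_nhds tendsto_const_nhds
    have hten : Tendsto (fun n => F (u n, t₀)) atTop (𝓝 (F (x, t₀))) :=
      hcontAt.tendsto.comp hpair
    have hev : ∀ᶠ n in atTop, 0 < F (u n, t₀) :=
      hten.eventually (eventually_gt_nhds (by linarith))
    obtain ⟨N, hN⟩ := eventually_atTop.mp hev
    have hseg : ∀ n : ℕ, ContinuousOn (fun s : ℝ≥0 => F (u n, s)) (Icc 0 t₀) := by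
      intro n
      apply hFc.comp ((Continuous.prodMk_right (u n)).continuousOn)
      intro s hs
      rw [mXs]
      rintro ⟨h1, -⟩
      exact (huP n).1 h1
    have hzero : ∀ n : ℕ, ∃ s : ℝ≥0, s ∈ Icc (0:ℝ≥0) t₀ ∧ F (u (N + n), s) = 0 := by
      intro n
      have hIVT := intermediate_value_Icc (zero_le (a := t₀)) (hseg (N + n))
      have h0mem : (0:ℝ) ∈ Icc (F (u (N + n), 0)) (F (u (N + n), t₀)) :=
        ⟨(huP (N + n)).2.le, (hN (N + n) (Nat.le_add_right N n)).le⟩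
      obtain ⟨s, hs, hFs⟩ := hIVT h0mem
      exact ⟨s, hs, hFs⟩
    choose s hsmem hs0 using hzero
    set v : ℕ → I × ℝ≥0 := fun n => (u (N + n), s n) with hv
    have hvK : ∀ n, v n ∈ Xs ∩ F ⁻¹' ({0} : Set ℝ) := by
      intro n
      refine ⟨?_, by simpa using hs0 n⟩
      rw [mXs]
      rintro ⟨h1, -⟩
      exact (huP (N + n)).1 h1
    obtain ⟨w₀, hw₀K, φ, hφ, hconv⟩ := (hFprop _ isCompact_singleton).tendsto_subseq hvK
    have h1a : Tendsto (fun n => (v (φ n)).1) atTop (𝓝 w₀.1) :=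
      (continuous_fst.tendsto w₀).comp hconv
    have hNφ : Tendsto (fun n : ℕ => N + φ n) atTop atTop :=
      tendsto_atTop_mono (fun n => Nat.le_add_left (φ n) N) hφ.tendsto_atTop
    have h1b : Tendsto (fun n => u (N + φ n)) atTop (𝓝 x) := hulim.comp hNφ
    have hw1 : w₀.1 = x := tendsto_nhds_unique h1a h1b
    have h2a : Tendsto (fun n => (v (φ n)).2) atTop (𝓝 w₀.2) :=
      (continuous_snd.tendsto w₀).comp hconv
    have hw2mem : w₀.2 ∈ Icc (0:ℝ≥0) t₀ :=
      isClosed_Icc.mem_of_tendsto h2a (Eventually.of_forall fun n => hsmem (φ n))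
    have hw2pos : 0 < w₀.2 := by
      rcases eq_or_lt_of_le (zero_le (a := w₀.2)) with h | h
      · exfalso
        exact (mXs w₀).mp hw₀K.1 ⟨hw1 ▸ hx, h.symm⟩
      · exact h
    have hgt : 1 < F (x, w₀.2) := hδ _ hw2pos (lt_of_le_of_lt hw2mem.2 ht₀δ)
    have hF0 : F w₀ = 0 := by simpa using hw₀K.2
    rw [show ((x, w₀.2) : I × ℝ≥0) = w₀ by rw [← hw1]] at hgt
    linarith
  -- step relation on I \ P at level 0
  have zstep : ∀ x : I, x ∉ P → F (Φ x, 0) = F (x, 0) + 1 := by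
    intro x hx
    have hxXs : ((x, (0:ℝ≥0)) : I × ℝ≥0) ∈ Xs := by
      rw [mXs]; rintro ⟨h1, -⟩; exact hx h1
    have := hFeq (x, 0) hxXs
    rwa [η0] at this
  -- the open set {f > 0} off P
  have hUopen : IsOpen {y : I | y ∉ P ∧ 0 < F (y, 0)} := by
    have hg : ContinuousOn (fun y : I => F (y, 0)) Pᶜ := by
      apply hFc.comp (Continuous.continuousOn (by fun_prop))
      intro y hy
      rw [mXs]
      rintro ⟨h1, -⟩
      exact hy h1
    have h := hg.isOpen_inter_preimage hP.isOpen_compl (isOpen_Ioi (a := (0:ℝ)))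
    have he : {y : I | y ∉ P ∧ 0 < F (y, 0)} = Pᶜ ∩ (fun y : I => F (y, 0)) ⁻¹' (Ioi 0) := by
      ext y
      simp [mem_compl_iff]
    rw [he]
    exact h
  have hUsub : {y : I | y ∉ P ∧ 0 < F (y, 0)} ⊆ C := by
    intro y hy
    rw [hC]
    exact Or.inr ⟨hy.1, hy.2.le⟩
  have part1 : Φ '' C ⊆ interior C := by
    rintro y ⟨c, hc, rfl⟩
    rw [hC] at hc
    rcases hc with hcP | ⟨hcP, hcF⟩
    · exact intP _ ((hP1 c).mpr hcP)
    · have h1 : F (Φ c, 0) = F (c, 0) + 1 := zstep c hcP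
      have hmem : Φ c ∈ {y : I | y ∉ P ∧ 0 < F (y, 0)} :=
        ⟨fun h => hcP ((hP1 c).mp h), by linarith⟩
      exact interior_maximal hUsub hUopen hmem
  -- ℤ-iterates
  have zlem : ∀ i : ℤ, ∀ x : I,
      ((Φ.toEquiv ^ i) x ∈ P ↔ x ∈ P) ∧ (x ∉ P → F ((Φ.toEquiv ^ i) x, 0) = F (x, 0) + i) := by
    intro i
    induction i using Int.induction_on with
    | zero => intro x; simp
    | succ i ih =>
      intro x
      have happ : (Φ.toEquiv ^ ((i : ℤ) + 1)) x = (Φ.toEquiv ^ (i : ℤ)) (Φ x) := by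
        rw [zpow_add_one, Equiv.Perm.mul_apply]
        rfl
      rw [happ]
      constructor
      · rw [(ih (Φ x)).1, hP1]
      · intro hx
        have hΦx : Φ x ∉ P := fun h => hx ((hP1 x).mp h)
        rw [(ih (Φ x)).2 hΦx, zstep x hx]
        push_cast
        ring
    | pred i ih =>
      intro x
      have happ : (Φ.toEquiv ^ (-(i : ℤ) - 1)) x = (Φ.toEquiv ^ (-(i : ℤ))) (Φ.symm x) := by
        rw [zpow_sub_one, Equiv.Perm.mul_apply]
        rfl
      have hsymmP : Φ.symm x ∈ P ↔ x ∈ P := by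
        conv_rhs => rw [show x = Φ (Φ.symm x) from (Φ.apply_symm_apply x).symm]
        rw [hP1]
      rw [happ]
      constructor
      · rw [(ih (Φ.symm x)).1, hsymmP]
      · intro hx
        have hsx : Φ.symm x ∉ P := fun h => hx (hsymmP.mp h)
        have hFs : F (Φ.symm x, 0) = F (x, 0) - 1 := by
          have := zstep (Φ.symm x) hsx
          rw [Φ.apply_symm_apply] at this
          linarith
        rw [(ih (Φ.symm x)).2 hsx, hFs]
        push_cast
        ring
  have part2 : (⋂ i : ℤ, ⇑(Φ.toEquiv ^ i) '' C) = P := by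
    apply Subset.antisymm
    · intro x hx
      by_contra hxP
      have hall : ∀ i : ℤ, (i : ℝ) ≤ F (x, 0) := by
        intro i
        have hxi := mem_iInter.mp hx i
        obtain ⟨c, hc, hcx⟩ := hxi
        have hcdef : c = (Φ.toEquiv ^ (-i)) x := by
          rw [← hcx, zpow_neg]
          exact (Equiv.symm_apply_apply _ _).symm
        have hcP : c ∉ P := by
          rw [hcdef]
          intro h
          exact hxP ((zlem (-i) x).1.mp h)
        have hcF : F (c, 0) = F (x, 0) - i := by
          rw [hcdef, (zlem (-i) x).2 hxP]
          push_cast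
          ring
        rw [hC] at hc
        rcases hc with h | ⟨-, h⟩
        · exact absurd h hcP
        · rw [hcF] at h
          linarith
      obtain ⟨i, hi⟩ := exists_int_gt (F (x, 0))
      linarith [hall i]
    · intro x hxP
      apply mem_iInter.mpr
      intro i
      refine ⟨(Φ.toEquiv ^ i).symm x, ?_, Equiv.apply_symm_apply _ x⟩
      rw [hC]
      left
      have := (zlem i ((Φ.toEquiv ^ i).symm x)).1
      rw [Equiv.apply_symm_apply] at this
      exact this.mp hxP
  refine ⟨part1, part2, ?_⟩
  apply eq_univ_of_forall
  intro x
  by_cases hxP : x ∈ P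
  · exact mem_iUnion.mpr ⟨0, x, by rw [hC]; exact Or.inl hxP, by simp⟩
  · obtain ⟨j, hj⟩ := exists_int_gt (-F (x, 0))
    refine mem_iUnion.mpr ⟨-j, (Φ.toEquiv ^ j) x, ?_, ?_⟩
    · rw [hC]
      right
      refine ⟨fun h => hxP ((zlem j x).1.mp h), ?_⟩
      rw [(zlem j x).2 hxP]
      linarith
    · rw [zpow_neg]
      exact Equiv.symm_apply_apply _ _
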